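/- Let F : C ⇄ D : G be an adjunction between model categories in which F preserves cofibrant objects and weak equivalences between cofibrant objects, and G preserves fibrant objects and weak equivalences between fibrant objects. Then the left derived functor LF : Ho(C) → Ho(D) is left adjoint to the right derived functor RG : Ho(D) → Ho(C). -/

import Mathlib

open CategoryTheory

universe v u

/-- The homotopical data of a model category relevant to derived functors:
weak equivalences (containing identities and satisfying two-out-of-three),
cofibrant and fibrant objects, and functorial cofibrant and fibrant
replacements `q : Q ⟶ 𝟭` and `r : 𝟭 ⟶ R`. -/
structure ModelData (C : Type u) [Category.{v} C] where
  W : MorphismProperty C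
  containsIdentities : W.ContainsIdentities
  twoOutOfThree : W.HasTwoOutOfThreeProperty
  Cofibrant : C → Prop
  Fibrant : C → Prop
  Q : C ⥤ C
  q : Q ⟶ 𝟭 C
  R : C ⥤ C
  r : 𝟭 C ⟶ R
  cofibrant_Q : ∀ X, Cofibrant (Q.obj X)
  fibrant_R : ∀ X, Fibrant (R.obj X)
  W_q : ∀ X, W (q.app X)
  W_r : ∀ X, W (r.app X)

variable {C : Type u} [Category.{v} C] {D : Type u} [Category.{v} D]

/-- `F` preserves cofibrant objects and weak equivalences between cofibrant
objects. -/
def PreservesCofibrant (M : ModelData C) (N : ModelData D) (F : C ⥤ D) : Prop :=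
  (∀ X, M.Cofibrant X → N.Cofibrant (F.obj X)) ∧
    (∀ ⦃X Y : C⦄ (f : X ⟶ Y), M.Cofibrant X → M.Cofibrant Y → M.W f →
      N.W (F.map f))

/-- `F` preserves fibrant objects and weak equivalences between fibrant
objects. -/
def PreservesFibrant (M : ModelData C) (N : ModelData D) (F : C ⥤ D) : Prop :=
  (∀ X, M.Fibrant X → N.Fibrant (F.obj X)) ∧
    (∀ ⦃X Y : C⦄ (f : X ⟶ Y), M.Fibrant X → M.Fibrant Y → M.W f →
      N.W (F.map f))

namespace DerivedAdjAux

open CategoryTheory.Category CategoryTheory.Localization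

lemma keyQ (M : ModelData C) (N : ModelData D) (F : C ⥤ D)
    (hc : PreservesCofibrant M N F) (X : C) :
    N.W.Q.map (F.map (M.Q.map (M.q.app X))) =
      N.W.Q.map (F.map (M.q.app (M.Q.obj X))) := by
  haveI := M.twoOutOfThree
  have hW : ∀ {A B : C} (f : A ⟶ B), M.Cofibrant A → M.Cofibrant B → M.W f →
      IsIso (N.W.Q.map (F.map f)) :=
    fun f hA hB hf => Localization.inverts N.W.Q N.W _ (hc.2 f hA hB hf)
  have nat : ∀ {A B : C} (f : A ⟶ B),
      M.Q.map f ≫ M.q.app B = M.q.app A ≫ f := fun f => by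
    simpa using M.q.naturality f
  have hQq : ∀ (Z : C), M.W (M.Q.map (M.q.app Z)) := fun Z => by
    apply M.W.of_postcomp _ (M.q.app Z) (M.W_q Z)
    have h := nat (M.q.app Z)
    simp only [Functor.id_obj] at h
    rw [h]
    exact M.W.comp_mem _ _ (M.W_q _) (M.W_q _)
  haveI := hW _ (M.cofibrant_Q _) (M.cofibrant_Q _) (hQq X)
  haveI := hW _ (M.cofibrant_Q _) (M.cofibrant_Q _) (M.W_q (M.Q.obj X))
  haveI := hW _ (M.cofibrant_Q _) (M.cofibrant_Q _) (M.W_q (M.Q.obj (M.Q.obj X)))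
  have e3 : N.W.Q.map (F.map (M.Q.map (M.q.app (M.Q.obj X))))
      = N.W.Q.map (F.map (M.q.app (M.Q.obj (M.Q.obj X)))) := by
    have h := congrArg (fun f => N.W.Q.map (F.map f)) (nat (M.q.app (M.Q.obj X)))
    simp only [Functor.map_comp, Functor.id_obj] at h
    exact (cancel_mono (N.W.Q.map (F.map (M.q.app (M.Q.obj X))))).1 h
  have e4 : N.W.Q.map (F.map (M.Q.map (M.Q.map (M.q.app X))))
      = N.W.Q.map (F.map (M.Q.map (M.q.app (M.Q.obj X)))) := by
    have h := congrArg (fun f => N.W.Q.map (F.map (M.Q.map f))) (nat (M.q.app X))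
    simp only [Functor.map_comp, Functor.id_obj] at h
    exact (cancel_mono (N.W.Q.map (F.map (M.Q.map (M.q.app X))))).1 h
  have e2 := congrArg (fun f => N.W.Q.map (F.map f)) (nat (M.Q.map (M.q.app X)))
  simp only [Functor.map_comp, Functor.id_obj] at e2
  rw [e4, e3] at e2
  exact ((cancel_epi (N.W.Q.map (F.map (M.q.app (M.Q.obj (M.Q.obj X)))))).1 e2).symm

lemma keyR (N : ModelData D) (M : ModelData C) (G : D ⥤ C)
    (hf : PreservesFibrant N M G) (Y : D) :
    M.W.Q.map (G.map (N.R.map (N.r.app Y))) =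
      M.W.Q.map (G.map (N.r.app (N.R.obj Y))) := by
  haveI := N.twoOutOfThree
  have hW : ∀ {A B : D} (f : A ⟶ B), N.Fibrant A → N.Fibrant B → N.W f →
      IsIso (M.W.Q.map (G.map f)) :=
    fun f hA hB hf' => Localization.inverts M.W.Q M.W _ (hf.2 f hA hB hf')
  have nat : ∀ {A B : D} (f : A ⟶ B),
      f ≫ N.r.app B = N.r.app A ≫ N.R.map f := fun f => by
    simpa using N.r.naturality f
  have hRr : ∀ (Z : D), N.W (N.R.map (N.r.app Z)) := fun Z => by
    apply N.W.of_precomp (N.r.app Z) _ (N.W_r Z)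
    have h := nat (N.r.app Z)
    simp only [Functor.id_obj] at h
    rw [← h]
    exact N.W.comp_mem _ _ (N.W_r _) (N.W_r _)
  haveI := hW _ (N.fibrant_R _) (N.fibrant_R _) (hRr Y)
  haveI := hW _ (N.fibrant_R _) (N.fibrant_R _) (N.W_r (N.R.obj Y))
  haveI := hW _ (N.fibrant_R _) (N.fibrant_R _) (N.W_r (N.R.obj (N.R.obj Y)))
  -- e3' : L G r_{RRY} = L G (R r_{RY})
  have e3 : M.W.Q.map (G.map (N.r.app (N.R.obj (N.R.obj Y))))
      = M.W.Q.map (G.map (N.R.map (N.r.app (N.R.obj Y)))) := by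
    have h := congrArg (fun f => M.W.Q.map (G.map f)) (nat (N.r.app (N.R.obj Y)))
    simp only [Functor.map_comp, Functor.id_obj] at h
    exact (cancel_epi (M.W.Q.map (G.map (N.r.app (N.R.obj Y))))).1 h
  -- e4' : L G (R r_{RY}) = L G (R (R r_Y))
  have e4 : M.W.Q.map (G.map (N.R.map (N.r.app (N.R.obj Y))))
      = M.W.Q.map (G.map (N.R.map (N.R.map (N.r.app Y)))) := by
    have h := congrArg (fun f => M.W.Q.map (G.map (N.R.map f))) (nat (N.r.app Y))
    simp only [Functor.map_comp, Functor.id_obj] at h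
    exact (cancel_epi (M.W.Q.map (G.map (N.R.map (N.r.app Y))))).1 h
  -- e2' : at f = R r_Y : R r_Y ≫ r_{RRY} = r_{RY} ≫ R (R r_Y)
  have e2 := congrArg (fun f => M.W.Q.map (G.map f)) (nat (N.R.map (N.r.app Y)))
  simp only [Functor.map_comp, Functor.id_obj] at e2
  rw [← e4, ← e3] at e2
  exact (cancel_mono (M.W.Q.map (G.map (N.r.app (N.R.obj (N.R.obj Y)))))).1 e2

end DerivedAdjAux

namespace DerivedAdjAux

open CategoryTheory.Category CategoryTheory.Localization

variable (M : ModelData C) (N : ModelData D) (F : C ⥤ D) (G : D ⥤ C)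

/-- The natural isomorphism `M.Q ⋙ M.W.Q ≅ M.W.Q` induced by `q`. -/
noncomputable def isoQL : M.Q ⋙ M.W.Q ≅ M.W.Q := by
  haveI : ∀ X : C, IsIso (M.W.Q.map (M.q.app X)) :=
    fun X => Localization.inverts M.W.Q M.W _ (M.W_q X)
  exact NatIso.ofComponents (fun X => asIso (M.W.Q.map (M.q.app X)))
    (fun {X Y} f => by
      dsimp
      rw [← Functor.map_comp, ← Functor.map_comp]
      congr 1
      simpa using M.q.naturality f)

/-- The natural isomorphism `N.W.Q ≅ N.R ⋙ N.W.Q` induced by `r`. -/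
noncomputable def isoRL : N.W.Q ≅ N.R ⋙ N.W.Q := by
  haveI : ∀ Y : D, IsIso (N.W.Q.map (N.r.app Y)) :=
    fun Y => Localization.inverts N.W.Q N.W _ (N.W_r Y)
  exact NatIso.ofComponents (fun Y => asIso (N.W.Q.map (N.r.app Y)))
    (fun {X Y} f => by
      dsimp
      rw [← Functor.map_comp, ← Functor.map_comp]
      congr 1
      simpa using N.r.naturality f)

variable (adj : F ⊣ G)

/-- unit candidate at the level of `C`. -/
noncomputable def unitC : M.Q ⟶ M.Q ⋙ (F ⋙ N.R ⋙ G) where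
  app X := adj.unit.app (M.Q.obj X) ≫ G.map (N.r.app (F.obj (M.Q.obj X)))
  naturality {X Y} f := by
    dsimp
    rw [Category.assoc, ← G.map_comp]
    have h := N.r.naturality (F.map (M.Q.map f))
    simp only [Functor.id_obj, Functor.id_map] at h
    rw [← h, G.map_comp, ← Category.assoc, ← Category.assoc]
    congr 1
    have h2 := adj.unit.naturality (M.Q.map f)
    simp only [Functor.id_obj, Functor.id_map, Functor.comp_map] at h2
    exact h2

/-- counit candidate at the level of `D`. -/
noncomputable def counitD : ((N.R ⋙ G) ⋙ (M.Q ⋙ F)) ⟶ N.R where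
  app Y := F.map (M.q.app (G.obj (N.R.obj Y))) ≫ adj.counit.app (N.R.obj Y)
  naturality {X Y} f := by
    dsimp
    have h := adj.counit.naturality (N.R.map f)
    simp only [Functor.id_obj, Functor.id_map, Functor.comp_map] at h
    have h2 := M.q.naturality (G.map (N.R.map f))
    simp only [Functor.id_obj, Functor.id_map] at h2
    rw [← Category.assoc, ← F.map_comp, h2, F.map_comp, Category.assoc, h,
      Category.assoc]

variable (LF : M.W.Localization ⥤ N.W.Localization)
  (RG : N.W.Localization ⥤ M.W.Localization)
  (eL : M.W.Q ⋙ LF ≅ (M.Q ⋙ F) ⋙ N.W.Q)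
  (eR : N.W.Q ⋙ RG ≅ (N.R ⋙ G) ⋙ M.W.Q)

noncomputable def lift1 : Lifting M.W.Q M.W (M.Q ⋙ M.W.Q) (𝟭 M.W.Localization) :=
  ⟨(Functor.rightUnitor _) ≪≫ (isoQL M).symm⟩

noncomputable def lift2 : Lifting M.W.Q M.W ((M.Q ⋙ (F ⋙ N.R ⋙ G)) ⋙ M.W.Q) (LF ⋙ RG) :=
  ⟨Functor.isoWhiskerRight eL RG ≪≫ Functor.isoWhiskerLeft (M.Q ⋙ F) eR⟩

noncomputable def lift3 : Lifting N.W.Q N.W (((N.R ⋙ G) ⋙ (M.Q ⋙ F)) ⋙ N.W.Q) (RG ⋙ LF) :=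
  ⟨Functor.isoWhiskerRight eR LF ≪≫ Functor.isoWhiskerLeft (N.R ⋙ G) eL⟩

noncomputable def lift4 : Lifting N.W.Q N.W (N.R ⋙ N.W.Q) (𝟭 N.W.Localization) :=
  ⟨Functor.rightUnitor _ ≪≫ isoRL N⟩

noncomputable def lUnit : 𝟭 M.W.Localization ⟶ LF ⋙ RG :=
  letI := lift1 M
  letI := lift2 M N F G LF RG eL eR
  liftNatTrans M.W.Q M.W (M.Q ⋙ M.W.Q) ((M.Q ⋙ (F ⋙ N.R ⋙ G)) ⋙ M.W.Q)
    (𝟭 _) (LF ⋙ RG) (Functor.whiskerRight (unitC M N F G adj) M.W.Q)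

noncomputable def lCounit : RG ⋙ LF ⟶ 𝟭 N.W.Localization :=
  letI := lift3 M N F G LF RG eL eR
  letI := lift4 N
  liftNatTrans N.W.Q N.W (((N.R ⋙ G) ⋙ (M.Q ⋙ F)) ⋙ N.W.Q) (N.R ⋙ N.W.Q)
    (RG ⋙ LF) (𝟭 _) (Functor.whiskerRight (counitD M N F G adj) N.W.Q)

@[simp] lemma isoQL_hom_app (X : C) : (isoQL M).hom.app X = M.W.Q.map (M.q.app X) := rfl

@[simp] lemma isoRL_hom_app (Y : D) : (isoRL N).hom.app Y = N.W.Q.map (N.r.app Y) := rfl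

lemma lUnit_app (X : C) :
    (lUnit M N F G adj LF RG eL eR).app (M.W.Q.obj X) =
      (isoQL M).inv.app X ≫ M.W.Q.map ((unitC M N F G adj).app X) ≫
        eR.inv.app (F.obj (M.Q.obj X)) ≫ RG.map (eL.inv.app X) := by
  letI := lift1 M
  letI := lift2 M N F G LF RG eL eR
  rw [show (lUnit M N F G adj LF RG eL eR) = liftNatTrans M.W.Q M.W (M.Q ⋙ M.W.Q)
    ((M.Q ⋙ (F ⋙ N.R ⋙ G)) ⋙ M.W.Q) (𝟭 _) (LF ⋙ RG)
    (Functor.whiskerRight (unitC M N F G adj) M.W.Q) from rfl, liftNatTrans_app]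
  rw [show Lifting.iso M.W.Q M.W (M.Q ⋙ M.W.Q) (𝟭 M.W.Localization) = (Functor.rightUnitor _) ≪≫ (isoQL M).symm from rfl,
    show Lifting.iso M.W.Q M.W ((M.Q ⋙ F ⋙ N.R ⋙ G) ⋙ M.W.Q) (LF ⋙ RG) = Functor.isoWhiskerRight eL RG ≪≫ Functor.isoWhiskerLeft (M.Q ⋙ F) eR from rfl]
  simp (config := { zetaDelta := true }) [lift1, lift2, Localization.Lifting.iso]

lemma lCounit_app (Y : D) :
    (lCounit M N F G adj LF RG eL eR).app (N.W.Q.obj Y) =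
      LF.map (eR.hom.app Y) ≫ eL.hom.app (G.obj (N.R.obj Y)) ≫
        N.W.Q.map ((counitD M N F G adj).app Y) ≫ (isoRL N).inv.app Y := by
  letI := lift3 M N F G LF RG eL eR
  letI := lift4 N
  rw [show (lCounit M N F G adj LF RG eL eR) = liftNatTrans N.W.Q N.W
    (((N.R ⋙ G) ⋙ (M.Q ⋙ F)) ⋙ N.W.Q) (N.R ⋙ N.W.Q) (RG ⋙ LF) (𝟭 _)
    (Functor.whiskerRight (counitD M N F G adj) N.W.Q) from rfl, liftNatTrans_app]
  rw [show Lifting.iso N.W.Q N.W (((N.R ⋙ G) ⋙ (M.Q ⋙ F)) ⋙ N.W.Q) (RG ⋙ LF) = Functor.isoWhiskerRight eR LF ≪≫ Functor.isoWhiskerLeft (N.R ⋙ G) eL from rfl,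
    show Lifting.iso N.W.Q N.W (N.R ⋙ N.W.Q) (𝟭 N.W.Localization) = Functor.rightUnitor _ ≪≫ isoRL N from rfl]
  simp (config := { zetaDelta := true }) [lift3, lift4, Localization.Lifting.iso]

lemma coreQ (X : C) :
    F.map (M.Q.map ((unitC M N F G adj).app X)) ≫
        (counitD M N F G adj).app (F.obj (M.Q.obj X)) =
      F.map (M.q.app (M.Q.obj X)) ≫ N.r.app (F.obj (M.Q.obj X)) := by
  dsimp [unitC, counitD]
  have hq := M.q.naturality (adj.unit.app (M.Q.obj X) ≫ G.map (N.r.app (F.obj (M.Q.obj X))))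
  simp only [Functor.id_obj, Functor.id_map] at hq
  rw [← Category.assoc, ← F.map_comp, hq]
  have hcn := adj.counit.naturality (N.r.app (F.obj (M.Q.obj X)))
  simp only [Functor.id_obj, Functor.id_map, Functor.comp_map] at hcn
  simp only [Functor.map_comp, Category.assoc]
  rw [hcn, adj.left_triangle_components_assoc]

lemma coreR (Y : D) :
    (unitC M N F G adj).app (G.obj (N.R.obj Y)) ≫
        G.map (N.R.map ((counitD M N F G adj).app Y)) =
      M.q.app (G.obj (N.R.obj Y)) ≫ G.map (N.r.app (N.R.obj Y)) := by
  dsimp [unitC, counitD]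
  have hr := N.r.naturality (F.map (M.q.app (G.obj (N.R.obj Y))) ≫ adj.counit.app (N.R.obj Y))
  simp only [Functor.id_obj, Functor.id_map] at hr
  rw [Category.assoc, ← G.map_comp, ← hr]
  have hun := adj.unit.naturality (M.q.app (G.obj (N.R.obj Y)))
  simp only [Functor.id_obj, Functor.id_map, Functor.comp_map] at hun
  simp only [Functor.map_comp]
  simp only [← Category.assoc]
  rw [← hun]
  simp only [Category.assoc, adj.right_triangle_components_assoc]

noncomputable def derivedAdj
    (hc : PreservesCofibrant M N F) (hf : PreservesFibrant N M G) : LF ⊣ RG := by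
  refine Adjunction.mkOfUnitCounit
    { unit := lUnit M N F G adj LF RG eL eR
      counit := lCounit M N F G adj LF RG eL eR
      left_triangle := ?_
      right_triangle := ?_ }
  · apply Localization.natTrans_ext M.W.Q M.W
    intro X
    simp only [NatTrans.comp_app, Functor.whiskerRight_app, Functor.whiskerLeft_app,
      Functor.associator_hom_app, NatTrans.id_app, Functor.comp_obj, Functor.id_obj,
      Category.id_comp]
    rw [← cancel_mono (eL.hom.app X)]
    have hnat := (lCounit M N F G adj LF RG eL eR).naturality (eL.hom.app X)
    simp only [Functor.comp_obj, Functor.comp_map, Functor.id_obj, Functor.id_map] at hnat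
    rw [Category.assoc, ← hnat, lUnit_app, lCounit_app]
    simp only [Functor.map_comp, Category.assoc, Category.id_comp]
    rw [← Functor.map_comp_assoc LF (RG.map (eL.inv.app X)) (RG.map (eL.hom.app X)),
      ← RG.map_comp, Iso.inv_hom_id_app, RG.map_id, LF.map_id, Category.id_comp,
      ← Functor.map_comp_assoc LF (eR.inv.app (F.obj (M.Q.obj X))) (eR.hom.app (F.obj (M.Q.obj X))),
      Iso.inv_hom_id_app, LF.map_id, Category.id_comp]
    have hv := eL.hom.naturality ((unitC M N F G adj).app X)
    simp only [Functor.comp_obj, Functor.comp_map] at hv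
    rw [reassoc_of% hv]
    rw [← Functor.map_comp_assoc N.W.Q (F.map (M.Q.map ((unitC M N F G adj).app X)))
        ((counitD M N F G adj).app (F.obj (M.Q.obj X))),
      coreQ M N F G adj X, N.W.Q.map_comp, ← isoRL_hom_app N (F.obj (M.Q.obj X))]
    simp only [Category.assoc, Iso.hom_inv_id_app, Category.comp_id]
    rw [← keyQ M N F hc X]
    have hv2 := eL.hom.naturality (M.q.app X)
    simp only [Functor.comp_obj, Functor.comp_map, Functor.id_obj] at hv2
    rw [show N.W.Q.map (F.map (M.Q.map (M.q.app X))) ≫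
        𝟙 (N.W.Q.obj (F.obj (M.Q.obj X))) = N.W.Q.map (F.map (M.Q.map (M.q.app X)))
        from Category.comp_id _, ← hv2, ← isoQL_hom_app M X,
      ← Functor.map_comp_assoc LF ((isoQL M).inv.app X) ((isoQL M).hom.app X),
      Iso.inv_hom_id_app, LF.map_id, Category.id_comp]
    simp
  · apply Localization.natTrans_ext N.W.Q N.W
    intro Y
    simp only [NatTrans.comp_app, Functor.whiskerRight_app, Functor.whiskerLeft_app,
      Functor.associator_inv_app, NatTrans.id_app, Functor.comp_obj, Functor.id_obj,
      Category.id_comp]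
    rw [← cancel_epi (eR.inv.app Y)]
    have hnat := (lUnit M N F G adj LF RG eL eR).naturality (eR.inv.app Y)
    simp only [Functor.id_obj, Functor.id_map, Functor.comp_obj, Functor.comp_map] at hnat
    rw [reassoc_of% hnat, lUnit_app, lCounit_app]
    simp only [Functor.map_comp, Category.assoc]
    rw [← Functor.map_comp_assoc RG (LF.map (eR.inv.app Y)) (LF.map (eR.hom.app Y)),
      ← LF.map_comp, Iso.inv_hom_id_app, LF.map_id, RG.map_id, Category.id_comp,
      ← Functor.map_comp_assoc RG (eL.inv.app (G.obj (N.R.obj Y)))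
        (eL.hom.app (G.obj (N.R.obj Y))),
      Iso.inv_hom_id_app, RG.map_id, Category.id_comp]
    have hw := eR.inv.naturality ((counitD M N F G adj).app Y)
    simp only [Functor.comp_obj, Functor.comp_map] at hw
    rw [← reassoc_of% hw]
    rw [← Functor.map_comp_assoc M.W.Q ((unitC M N F G adj).app (G.obj (N.R.obj Y)))
        (G.map (N.R.map ((counitD M N F G adj).app Y))),
      coreR M N F G adj Y, M.W.Q.map_comp, Category.assoc, ← isoQL_hom_app M (G.obj (N.R.obj Y)),
      Iso.inv_hom_id_app_assoc, ← keyR N M G hf Y]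
    have hw2 := eR.inv.naturality (N.r.app Y)
    simp only [Functor.comp_obj, Functor.comp_map, Functor.id_obj] at hw2
    rw [reassoc_of% hw2, ← isoRL_hom_app N Y, ← RG.map_comp, Iso.hom_inv_id_app, RG.map_id]
    simp

end DerivedAdjAux

/-- If `F ⊣ G` is an adjunction between model categories in which `F` preserves
cofibrant objects and weak equivalences between cofibrant objects, and `G`
preserves fibrant objects and weak equivalences between fibrant objects (e.g. a
Quillen adjunction), then the left derived functor `LF` (induced by `F ∘ Q`) is
left adjoint to the right derived functor `RG` (induced by `G ∘ R`). -/
theorem derived_adjunction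
    (M : ModelData C) (N : ModelData D) (F : C ⥤ D) (G : D ⥤ C)
    (adj : F ⊣ G)
    (hc : PreservesCofibrant M N F) (hf : PreservesFibrant N M G)
    (LF : M.W.Localization ⥤ N.W.Localization)
    (RG : N.W.Localization ⥤ M.W.Localization)
    (eL : M.W.Q ⋙ LF ≅ (M.Q ⋙ F) ⋙ N.W.Q)
    (eR : N.W.Q ⋙ RG ≅ (N.R ⋙ G) ⋙ M.W.Q) :
    Nonempty (LF ⊣ RG) := by
  exact ⟨DerivedAdjAux.derivedAdj M N F G adj LF RG eL eR hc hf⟩
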